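/- Fix λ > 0 and let i, j ∈ {0, 1, …, K_λ} with i < j. Then: (a) σ̂_j² ≤ σ̂_i² if and only if (1/(j−i)) · Σ_{k=i+1}^{j} d_k²(PY) ≥ λ σ̂_j²; (b) in particular (i = j−1), σ̂_j² ≤ σ̂_{j−1}² if and only if d_j²(PY) ≥ λ σ̂_j²; (c) d_j²(PY) ≤ λ σ̂_j² if and only if d_j²(PY) ≤ λ σ̂_{j−1}². -/

import Mathlib

open scoped BigOperators NNReal ENNReal
open Classical MeasureTheory ProbabilityTheory

noncomputable section

/-- Squared Frobenius (Hilbert–Schmidt) norm of a real matrix. -/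
def frob2 {n m : ℕ} (M : Matrix (Fin n) (Fin m) ℝ) : ℝ :=
  ∑ i, ∑ j, (M i j) ^ 2

theorem Matrix.isHermitian_transpose_mul_self {m n α : Type*} [Fintype m] [CommRing α]
    [StarRing α] [TrivialStar α] (A : Matrix m n α) : (A.transpose * A).IsHermitian := by
  simp [Matrix.IsHermitian]

/-- `sval M k` is the `k`-th largest singular value of `M` (1-based indexing),
i.e. the square root of the `k`-th largest eigenvalue of `Mᴴ * M`; by convention
it is `0` for `k = 0` and for `k > m`. -/
def sval {n m : ℕ} (M : Matrix (Fin n) (Fin m) ℝ) (k : ℕ) : ℝ :=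
  if h : 1 ≤ k ∧ k ≤ m then
    Real.sqrt ((Matrix.isHermitian_transpose_mul_self M).eigenvalues
      (Tuple.sort (Matrix.isHermitian_transpose_mul_self M).eigenvalues ⟨m - k, by omega⟩))
  else 0

/-- A best rank-`k` approximation of `M` in Frobenius norm (rank-`k` truncated SVD),
with the convention that the rank-`0` truncation is `0`. -/
def trunc {n m : ℕ} (M : Matrix (Fin n) (Fin m) ℝ) (k : ℕ) :
    Matrix (Fin n) (Fin m) ℝ :=
  if k = 0 then 0
  else Classical.epsilon fun B : Matrix (Fin n) (Fin m) ℝ =>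
    B.rank ≤ k ∧ ∀ C : Matrix (Fin n) (Fin m) ℝ, C.rank ≤ k → frob2 (M - B) ≤ frob2 (M - C)

/-- `K_λ = ⌊(nm-1)/λ⌋ ∧ q ∧ m`. -/
def Kfun (n m q : ℕ) (lam : ℝ) : ℕ :=
  min (min (Nat.floor ((((n * m : ℕ) : ℝ) - 1) / lam)) q) m

/-- `σ̂_k² = ‖Y - (PY)_k‖² / (nm - λ k)`. -/
def sighat2 {n m : ℕ} (Y : Matrix (Fin n) (Fin m) ℝ)
    (P : Matrix (Fin n) (Fin n) ℝ) (lam : ℝ) (k : ℕ) : ℝ :=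
  frob2 (Y - trunc (P * Y) k) / (((n * m : ℕ) : ℝ) - lam * k)

/-- The selected rank `k̂ = ∑_{k=1}^{K_λ} 1{d_k²(PY) ≥ λ σ̂_k²}`,
which minimizes `σ̂_k²` over `{0, 1, …, K_λ}`. -/
def khat {n m : ℕ} (Y : Matrix (Fin n) (Fin m) ℝ)
    (P : Matrix (Fin n) (Fin n) ℝ) (q : ℕ) (lam : ℝ) : ℕ :=
  ∑ k ∈ Finset.Icc 1 (Kfun n m q lam),
    if lam * sighat2 Y P lam k ≤ (sval (P * Y) k) ^ 2 then 1 else 0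


/-! ### Auxiliary development: Eckart–Young theorem and consequences -/

namespace EY

open Matrix

lemma frob2_nonneg {n m : ℕ} (M : Matrix (Fin n) (Fin m) ℝ) : 0 ≤ frob2 M :=
  Finset.sum_nonneg fun _ _ => Finset.sum_nonneg fun _ _ => sq_nonneg _

lemma frob2_eq_zero {n m : ℕ} {M : Matrix (Fin n) (Fin m) ℝ} (h : frob2 M = 0) : M = 0 := by
  ext i j
  have h1 : ∀ i ∈ Finset.univ, (0:ℝ) ≤ ∑ j, (M i j)^2 :=
    fun _ _ => Finset.sum_nonneg fun _ _ => sq_nonneg _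
  have h2 := (Finset.sum_eq_zero_iff_of_nonneg h1).mp h i (Finset.mem_univ i)
  have h3 := (Finset.sum_eq_zero_iff_of_nonneg (fun _ _ => sq_nonneg _)).mp h2 j (Finset.mem_univ j)
  simpa using pow_eq_zero_iff (n := 2) (by norm_num) |>.mp h3

lemma frob2_eq_trace {n m : ℕ} (M : Matrix (Fin n) (Fin m) ℝ) :
    frob2 M = (Mᵀ * M).trace := by
  simp only [frob2, Matrix.trace, Matrix.diag, Matrix.mul_apply, Matrix.transpose_apply, pow_two]
  rw [Finset.sum_comm]

lemma frob2_add {n m : ℕ} (A B : Matrix (Fin n) (Fin m) ℝ) (h : (Aᵀ * B).trace = 0) :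
    frob2 (A + B) = frob2 A + frob2 B := by
  have hBA : (Bᵀ * A).trace = 0 := by
    have : (Bᵀ * A) = (Aᵀ * B)ᵀ := by simp [Matrix.transpose_mul]
    rw [this, Matrix.trace_transpose, h]
  simp only [frob2_eq_trace, Matrix.transpose_add, Matrix.add_mul, Matrix.mul_add,
    Matrix.trace_add, h, hBA]
  ring

/-- splitting with an idempotent symmetric Q on the right -/
lemma frob2_split_right {n m : ℕ} (X : Matrix (Fin n) (Fin m) ℝ)
    (Q : Matrix (Fin m) (Fin m) ℝ) (hQ2 : Q * Q = Q) (hQt : Qᵀ = Q) :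
    frob2 X = frob2 (X * Q) + frob2 (X - X * Q) := by
  have h : ((X * Q)ᵀ * (X - X * Q)).trace = 0 := by
    have h1 : (X * Q)ᵀ * (X - X * Q) = Q * (Xᵀ * X) - Q * (Xᵀ * X) * Q := by
      simp only [Matrix.transpose_mul, hQt, Matrix.mul_sub, Matrix.mul_assoc]
    rw [h1, Matrix.trace_sub, Matrix.trace_mul_comm (Q * (Xᵀ * X)) Q,
      show Q * (Q * (Xᵀ * X)) = (Q * Q) * (Xᵀ * X) by rw [Matrix.mul_assoc], hQ2, sub_self]
  have := frob2_add (X * Q) (X - X * Q) h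
  simpa using this

/-- splitting with an idempotent symmetric P on the left -/
lemma frob2_split_left {n m : ℕ} (X : Matrix (Fin n) (Fin m) ℝ)
    (P : Matrix (Fin n) (Fin n) ℝ) (hP2 : P * P = P) (hPt : Pᵀ = P) :
    frob2 X = frob2 (P * X) + frob2 (X - P * X) := by
  have h : ((P * X)ᵀ * (X - P * X)).trace = 0 := by
    have h1 : (P * X)ᵀ * (X - P * X) = Xᵀ * (P * X) - Xᵀ * ((P * P) * X) := by
      simp only [Matrix.transpose_mul, hPt, Matrix.mul_sub, Matrix.mul_assoc]
    rw [h1, hP2, Matrix.trace_sub, sub_self]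
  have := frob2_add (P * X) (X - P * X) h
  simpa using this

lemma card_filter_lt (m r : ℕ) (h : r ≤ m) :
    (Finset.univ.filter (fun i : Fin m => (i : ℕ) < r)).card = r := by
  rw [← Finset.card_range r]
  apply Finset.card_bij (fun (i : Fin m) _ => (i : ℕ))
  · intro a ha; simp only [Finset.mem_filter] at ha; simpa using ha.2
  · intro a ha b hb hab; exact Fin.ext hab
  · intro b hb
    simp only [Finset.mem_range] at hb
    exact ⟨⟨b, by omega⟩, by simpa using hb, rfl⟩

lemma card_filter_ge (m r : ℕ) (h : r ≤ m) :
    (Finset.univ.filter (fun i : Fin m => r ≤ (i : ℕ))).card = m - r := by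
  have h2 := Finset.card_filter_add_card_filter_not
    (s := (Finset.univ : Finset (Fin m))) (p := fun i : Fin m => (i : ℕ) < r)
  rw [card_filter_lt m r h] at h2
  simp only [not_lt, Finset.card_univ, Fintype.card_fin] at h2
  omega

/-- key weighted bound: the sum of the `r` smallest values of a monotone nonneg `b`
is at most `∑ b i * c i` when `0 ≤ c ≤ 1` and `r ≤ ∑ c`. -/
lemma weighted_min {m : ℕ} (b c : Fin m → ℝ) (hbmono : Monotone b)
    (hb0 : ∀ i, 0 ≤ b i) (hc0 : ∀ i, 0 ≤ c i) (hc1 : ∀ i, c i ≤ 1)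
    (r : ℕ) (hrm : r ≤ m) (hr : (r : ℝ) ≤ ∑ i, c i) :
    (∑ i : Fin m, if (i : ℕ) < r then b i else 0) ≤ ∑ i, b i * c i := by
  rcases Nat.eq_zero_or_pos r with hr0 | hrpos
  · subst hr0
    simp only [Nat.not_lt_zero, if_false, Finset.sum_const_zero]
    exact Finset.sum_nonneg fun i _ => mul_nonneg (hb0 i) (hc0 i)
  · have hrm1 : r - 1 < m := by omega
    set thr := b ⟨r - 1, hrm1⟩ with hthr
    have hthr0 : 0 ≤ thr := hb0 _
    have key : ∀ i : Fin m, (if (i : ℕ) < r then b i else 0)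
        ≤ b i * c i - thr * c i + (if (i : ℕ) < r then thr else 0) := by
      intro i
      by_cases hi : (i : ℕ) < r
      · simp only [hi, if_true]
        have hbi : b i ≤ thr := hbmono (by simp [Fin.le_def]; omega)
        nlinarith [hc0 i, hc1 i]
      · simp only [hi, if_false]
        have hbi : thr ≤ b i := hbmono (by simp [Fin.le_def]; omega)
        nlinarith [hc0 i]
    calc (∑ i : Fin m, if (i : ℕ) < r then b i else 0)
        ≤ ∑ i : Fin m, (b i * c i - thr * c i + (if (i : ℕ) < r then thr else 0)) :=
          Finset.sum_le_sum fun i _ => key i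
      _ = (∑ i, b i * c i) - thr * (∑ i, c i) + (r : ℝ) * thr := by
          rw [Finset.sum_add_distrib, Finset.sum_sub_distrib, ← Finset.mul_sum]
          congr 1
          rw [← Finset.sum_filter, Finset.sum_const, card_filter_lt m r hrm, nsmul_eq_mul]
      _ ≤ ∑ i, b i * c i := by nlinarith

lemma spectral {m : ℕ} (S : Matrix (Fin m) (Fin m) ℝ) (hS : S.IsHermitian) :
    S = (hS.eigenvectorUnitary : Matrix (Fin m) (Fin m) ℝ) * Matrix.diagonal hS.eigenvalues
      * (hS.eigenvectorUnitary : Matrix (Fin m) (Fin m) ℝ)ᵀ := by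
  have := hS.spectral_theorem
  simpa [RCLike.ofReal_real_eq_id, Matrix.star_eq_conjTranspose,
    Matrix.conjTranspose_eq_transpose_of_trivial] using this

lemma VtV {m : ℕ} (S : Matrix (Fin m) (Fin m) ℝ) (hS : S.IsHermitian) :
    (hS.eigenvectorUnitary : Matrix (Fin m) (Fin m) ℝ)ᵀ
      * (hS.eigenvectorUnitary : Matrix (Fin m) (Fin m) ℝ) = 1 := by
  have := (hS.eigenvectorUnitary).2
  rw [Matrix.mem_unitaryGroup_iff'] at this
  simpa [Matrix.star_eq_conjTranspose, Matrix.conjTranspose_eq_transpose_of_trivial] using this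

lemma VVt {m : ℕ} (S : Matrix (Fin m) (Fin m) ℝ) (hS : S.IsHermitian) :
    (hS.eigenvectorUnitary : Matrix (Fin m) (Fin m) ℝ)
      * (hS.eigenvectorUnitary : Matrix (Fin m) (Fin m) ℝ)ᵀ = 1 := by
  have := (hS.eigenvectorUnitary).2
  rw [Matrix.mem_unitaryGroup_iff] at this
  simpa [Matrix.star_eq_conjTranspose, Matrix.conjTranspose_eq_transpose_of_trivial] using this

/-- rank of a real symmetric matrix = number of nonzero eigenvalues -/
lemma rank_eq_card {m : ℕ} {S : Matrix (Fin m) (Fin m) ℝ} (hS : S.IsHermitian) :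
    S.rank = (Finset.univ.filter fun i => hS.eigenvalues i ≠ 0).card := by
  set V : Matrix (Fin m) (Fin m) ℝ := (hS.eigenvectorUnitary : Matrix (Fin m) (Fin m) ℝ)
  have hsp := spectral S hS
  have h1 : S.rank ≤ (Matrix.diagonal hS.eigenvalues).rank := by
    calc S.rank = (V * Matrix.diagonal hS.eigenvalues * Vᵀ).rank := by rw [← hsp]
      _ ≤ (V * Matrix.diagonal hS.eigenvalues).rank := Matrix.rank_mul_le_left _ _
      _ ≤ (Matrix.diagonal hS.eigenvalues).rank := Matrix.rank_mul_le_right _ _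
  have hVtV := VtV S hS
  have hdiag : Matrix.diagonal hS.eigenvalues = Vᵀ * S * V := by
    conv_rhs => rw [hsp]
    rw [show V * Matrix.diagonal hS.eigenvalues * Vᵀ = V * (Matrix.diagonal hS.eigenvalues * Vᵀ)
      by rw [Matrix.mul_assoc]]
    rw [show Vᵀ * (V * (Matrix.diagonal hS.eigenvalues * Vᵀ)) * V
        = (Vᵀ * V) * Matrix.diagonal hS.eigenvalues * (Vᵀ * V) by
      simp only [Matrix.mul_assoc]]
    rw [hVtV]
    simp
  have h2 : (Matrix.diagonal hS.eigenvalues).rank ≤ S.rank := by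
    calc (Matrix.diagonal hS.eigenvalues).rank = (Vᵀ * S * V).rank := by rw [← hdiag]
      _ ≤ (Vᵀ * S).rank := Matrix.rank_mul_le_left _ _
      _ ≤ S.rank := Matrix.rank_mul_le_right _ _
  have h3 : (Matrix.diagonal hS.eigenvalues).rank
      = (Finset.univ.filter fun i => hS.eigenvalues i ≠ 0).card := by
    rw [Matrix.rank_diagonal, Fintype.card_subtype]
  omega

/-- the key projection construction from a 0/1-valued function on eigenvalues -/
lemma herm_proj {m : ℕ} {S : Matrix (Fin m) (Fin m) ℝ} (hS : S.IsHermitian) (χ : Fin m → ℝ)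
    (hχ : ∀ i, χ i = 0 ∨ χ i = 1) :
    ∃ Q : Matrix (Fin m) (Fin m) ℝ,
      Q * Q = Q ∧ Qᵀ = Q ∧
      Q.rank ≤ (Finset.univ.filter fun i => χ i ≠ 0).card ∧
      Q.trace = ∑ i, χ i ∧
      (S * Q).trace = ∑ i, hS.eigenvalues i * χ i ∧
      ((∀ i, hS.eigenvalues i * χ i = 0) → S * Q = 0) := by
  set V : Matrix (Fin m) (Fin m) ℝ := (hS.eigenvectorUnitary : Matrix (Fin m) (Fin m) ℝ) with hV
  have hVtV := VtV S hS
  have hsp := spectral S hS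
  rw [← hV] at hVtV hsp
  refine ⟨V * Matrix.diagonal χ * Vᵀ, ?_, ?_, ?_, ?_, ?_, ?_⟩
  · rw [show V * Matrix.diagonal χ * Vᵀ * (V * Matrix.diagonal χ * Vᵀ)
        = V * (Matrix.diagonal χ * ((Vᵀ * V) * Matrix.diagonal χ)) * Vᵀ by
      simp only [Matrix.mul_assoc], hVtV, Matrix.one_mul, Matrix.diagonal_mul_diagonal]
    have hfun : (fun i => χ i * χ i) = χ := funext fun i => by rcases hχ i with h | h <;> simp [h]
    rw [hfun]
  · simp only [Matrix.transpose_mul, Matrix.transpose_transpose, Matrix.diagonal_transpose,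
      Matrix.mul_assoc]
  · calc (V * Matrix.diagonal χ * Vᵀ).rank
        ≤ (V * Matrix.diagonal χ).rank := Matrix.rank_mul_le_left _ _
      _ ≤ (Matrix.diagonal χ).rank := Matrix.rank_mul_le_right _ _
      _ = _ := by rw [Matrix.rank_diagonal, Fintype.card_subtype]
  · rw [Matrix.trace_mul_cycle, hVtV, Matrix.one_mul, Matrix.trace_diagonal]
  · conv_lhs => rw [hsp]
    rw [show V * Matrix.diagonal hS.eigenvalues * Vᵀ * (V * Matrix.diagonal χ * Vᵀ)
        = V * (Matrix.diagonal hS.eigenvalues * ((Vᵀ * V) * Matrix.diagonal χ)) * Vᵀ by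
      simp only [Matrix.mul_assoc], hVtV, Matrix.one_mul, Matrix.diagonal_mul_diagonal]
    rw [Matrix.trace_mul_cycle, hVtV, Matrix.one_mul, Matrix.trace_diagonal]
  · intro h
    conv_lhs => rw [hsp]
    rw [show V * Matrix.diagonal hS.eigenvalues * Vᵀ * (V * Matrix.diagonal χ * Vᵀ)
        = V * (Matrix.diagonal hS.eigenvalues * ((Vᵀ * V) * Matrix.diagonal χ)) * Vᵀ by
      simp only [Matrix.mul_assoc], hVtV, Matrix.one_mul, Matrix.diagonal_mul_diagonal]
    rw [show (fun i => hS.eigenvalues i * χ i) = fun _ => (0:ℝ) from funext h]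
    simp

lemma trace_eq_sum_eigen {m : ℕ} {S : Matrix (Fin m) (Fin m) ℝ} (hS : S.IsHermitian) :
    S.trace = ∑ i, hS.eigenvalues i := by
  have hVtV := VtV S hS
  conv_lhs => rw [spectral S hS]
  rw [Matrix.trace_mul_cycle, hVtV, Matrix.one_mul, Matrix.trace_diagonal]

/-- tail sum of eigenvalues of `MᵀM` (the `m-k` smallest ones) -/
def tailSum {n m : ℕ} (M : Matrix (Fin n) (Fin m) ℝ) (k : ℕ) : ℝ :=
  ∑ l : Fin m, if (l : ℕ) < m - k then
    (Matrix.isHermitian_transpose_mul_self M).eigenvalues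
      (Tuple.sort (Matrix.isHermitian_transpose_mul_self M).eigenvalues l) else 0

lemma eigen_nonneg {n m : ℕ} (M : Matrix (Fin n) (Fin m) ℝ) (i : Fin m) :
    0 ≤ (Matrix.isHermitian_transpose_mul_self M).eigenvalues i := by
  have hps : (Mᵀ * M).PosSemidef := by
    have := Matrix.posSemidef_conjTranspose_mul_self M
    rwa [Matrix.conjTranspose_eq_transpose_of_trivial] at this
  exact hps.eigenvalues_nonneg i

lemma frob2_mul_proj {n m : ℕ} (X : Matrix (Fin n) (Fin m) ℝ)
    (Q : Matrix (Fin m) (Fin m) ℝ) (hQ2 : Q * Q = Q) (hQt : Qᵀ = Q) :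
    frob2 (X * Q) = ((Xᵀ * X) * Q).trace := by
  rw [frob2_eq_trace]
  have h1 : (X * Q)ᵀ * (X * Q) = Q * ((Xᵀ * X) * Q) := by
    rw [Matrix.transpose_mul, hQt]; simp only [Matrix.mul_assoc]
  rw [h1, Matrix.trace_mul_comm Q ((Xᵀ * X) * Q), Matrix.mul_assoc, hQ2]

/-- Lower bound half of Eckart-Young -/
lemma ey_lower {n m : ℕ} (M : Matrix (Fin n) (Fin m) ℝ) (k : ℕ) (hkm : k ≤ m)
    (C : Matrix (Fin n) (Fin m) ℝ) (hC : C.rank ≤ k) :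
    tailSum M k ≤ frob2 (M - C) := by
  classical
  have hct : Cᴴ = Cᵀ := Matrix.conjTranspose_eq_transpose_of_trivial C
  have hT := Matrix.isHermitian_transpose_mul_self C
  obtain ⟨Q, hQ2, hQt, -, hQtr, -, hSQ0⟩ := herm_proj hT
    (fun i => if hT.eigenvalues i = 0 then 1 else 0)
    (fun i => by by_cases hh : hT.eigenvalues i = 0 <;> simp [hh])
  have hTQ : (Cᵀ * C) * Q = 0 := by
    rw [← hct]
    exact hSQ0 (fun i => by by_cases hh : hT.eigenvalues i = 0 <;> simp [hh])
  -- C * Q = 0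
  have hCQ : C * Q = 0 := by
    apply frob2_eq_zero
    rw [frob2_mul_proj C Q hQ2 hQt, hTQ, Matrix.trace_zero]
  -- trace Q ≥ m - k
  have hrank : (Cᵀ * C).rank = C.rank := Matrix.rank_transpose_mul_self C
  have hcard : (Finset.univ.filter fun i => hT.eigenvalues i ≠ 0).card = C.rank := by
    rw [← hrank, ← rank_eq_card hT]
  have htrQ : ((m : ℝ) - k) ≤ Q.trace := by
    rw [hQtr]
    have heq : ∑ i, (if hT.eigenvalues i = 0 then (1:ℝ) else 0)
        = ((Finset.univ.filter fun i => hT.eigenvalues i = 0).card : ℝ) := by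
      rw [Finset.card_filter]
      push_cast
      rfl
    rw [heq]
    have h2 := Finset.card_filter_add_card_filter_not
      (s := (Finset.univ : Finset (Fin m))) (p := fun i => hT.eigenvalues i = 0)
    simp only [Finset.card_univ, Fintype.card_fin] at h2
    have h3 : (Finset.univ.filter fun i => ¬ hT.eigenvalues i = 0).card = C.rank := by
      rw [← hcard]
    have h4 : (Finset.univ.filter fun i => hT.eigenvalues i = 0).card = m - C.rank := by omega
    rw [h4]
    have h5 : C.rank ≤ m := by omega
    push_cast [Nat.cast_sub h5]
    have : (C.rank : ℝ) ≤ k := by exact_mod_cast hC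
    linarith
  -- now transport through eigenbasis of MᵀM
  set hS := Matrix.isHermitian_transpose_mul_self M with hSdef
  set g : Fin m → ℝ := hS.eigenvalues with hgdef
  set V : Matrix (Fin m) (Fin m) ℝ := (hS.eigenvectorUnitary : Matrix (Fin m) (Fin m) ℝ) with hV
  have hVtV : Vᵀ * V = 1 := by
    have := (hS.eigenvectorUnitary).2
    rw [Matrix.mem_unitaryGroup_iff'] at this
    simpa [Matrix.star_eq_conjTranspose, Matrix.conjTranspose_eq_transpose_of_trivial] using this
  have hVVt : V * Vᵀ = 1 := by
    have := (hS.eigenvectorUnitary).2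
    rw [Matrix.mem_unitaryGroup_iff] at this
    simpa [Matrix.star_eq_conjTranspose, Matrix.conjTranspose_eq_transpose_of_trivial] using this
  have hsp : Mᵀ * M = V * Matrix.diagonal g * Vᵀ := by
    have := hS.spectral_theorem
    simpa [RCLike.ofReal_real_eq_id, Matrix.star_eq_conjTranspose,
      Matrix.conjTranspose_eq_transpose_of_trivial] using this
  set Q' : Matrix (Fin m) (Fin m) ℝ := Vᵀ * Q * V with hQ'
  have hQ'2 : Q' * Q' = Q' := by
    rw [hQ', show Vᵀ * Q * V * (Vᵀ * Q * V) = Vᵀ * (Q * ((V * Vᵀ) * Q)) * V by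
      simp only [Matrix.mul_assoc], hVVt, Matrix.one_mul, hQ2]
  have hQ't : Q'ᵀ = Q' := by
    rw [hQ']
    simp only [Matrix.transpose_mul, Matrix.transpose_transpose, hQt, Matrix.mul_assoc]
  have hQ'tr : Q'.trace = Q.trace := by
    rw [hQ', Matrix.trace_mul_cycle, hVVt, Matrix.one_mul]
  -- diagonal entries of Q' are in [0,1]
  have hdiag01 : ∀ i, 0 ≤ Q' i i ∧ Q' i i ≤ 1 := by
    intro i
    have hsq : Q' i i = ∑ j, (Q' i j) ^ 2 := by
      conv_lhs => rw [← hQ'2]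
      rw [Matrix.mul_apply]
      congr 1; funext j
      rw [show Q' j i = Q'ᵀ i j from rfl, hQ't, pow_two]
    have h0 : 0 ≤ Q' i i := by
      rw [hsq]; exact Finset.sum_nonneg fun _ _ => sq_nonneg _
    have hsq' : (Q' i i)^2 ≤ ∑ j, (Q' i j)^2 :=
      Finset.single_le_sum (f := fun j => (Q' i j)^2) (fun _ _ => sq_nonneg _)
        (Finset.mem_univ i)
    exact ⟨h0, by nlinarith [hsq, hsq']⟩
  -- frob2 (M - C) ≥ trace(S Q) = ∑ g i * Q' i i
  have hMQ : (M - C) * Q = M * Q := by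
    rw [Matrix.sub_mul, hCQ, sub_zero]
  have step1 : frob2 ((M - C) * Q) ≤ frob2 (M - C) := by
    have := frob2_split_right (M - C) Q hQ2 hQt
    have := frob2_nonneg ((M - C) - (M - C) * Q)
    linarith
  have step2 : frob2 (M * Q) = ((Mᵀ * M) * Q).trace := frob2_mul_proj M Q hQ2 hQt
  have step3 : ((Mᵀ * M) * Q).trace = ∑ i, g i * Q' i i := by
    rw [hsp, show V * Matrix.diagonal g * Vᵀ * Q = V * (Matrix.diagonal g * (Vᵀ * Q)) by
      simp only [Matrix.mul_assoc], Matrix.trace_mul_comm V,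
      show Matrix.diagonal g * (Vᵀ * Q) * V = Matrix.diagonal g * Q' by
        rw [hQ']; simp only [Matrix.mul_assoc]]
    rw [Matrix.trace]
    simp only [Matrix.diag, Matrix.mul_apply, Matrix.diagonal_apply]
    rw [Finset.sum_congr rfl (fun i _ => ?_)]
    rw [Finset.sum_eq_single i (fun j _ hj => by simp [Ne.symm hj]) (by simp)]
    simp
  -- apply weighted_min with sorted eigenvalues
  set σ := Tuple.sort g with hσ
  have hmono : Monotone (g ∘ σ) := Tuple.monotone_sort g
  have htr' : ((m - k : ℕ) : ℝ) ≤ ∑ i, Q' (σ i) (σ i) := by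
    rw [Equiv.sum_comp σ (fun i => Q' i i)]
    have : ∑ i, Q' i i = Q'.trace := rfl
    rw [this, hQ'tr]
    have : ((m - k : ℕ) : ℝ) ≤ (m : ℝ) - k := by
      push_cast [Nat.cast_sub hkm]; linarith
    linarith
  have key := weighted_min (g ∘ σ) (fun i => Q' (σ i) (σ i)) hmono
    (fun i => eigen_nonneg M (σ i)) (fun i => (hdiag01 (σ i)).1) (fun i => (hdiag01 (σ i)).2)
    (m - k) (by omega) htr'
  have hsum : ∑ i, (g ∘ σ) i * Q' (σ i) (σ i) = ∑ i, g i * Q' i i :=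
    Equiv.sum_comp σ (fun i => g i * Q' i i)
  calc tailSum M k = ∑ i : Fin m, if (i : ℕ) < m - k then (g ∘ σ) i else 0 := rfl
    _ ≤ ∑ i, (g ∘ σ) i * Q' (σ i) (σ i) := key
    _ = ∑ i, g i * Q' i i := hsum
    _ = ((Mᵀ * M) * Q).trace := step3.symm
    _ = frob2 (M * Q) := step2.symm
    _ = frob2 ((M - C) * Q) := by rw [hMQ]
    _ ≤ frob2 (M - C) := step1

lemma frob2_M_eq {n m : ℕ} (M : Matrix (Fin n) (Fin m) ℝ) :
    frob2 M = ∑ i, (Matrix.isHermitian_transpose_mul_self M).eigenvalues i := by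
  have hct : Mᴴ = Mᵀ := Matrix.conjTranspose_eq_transpose_of_trivial M
  rw [frob2_eq_trace]
  exact trace_eq_sum_eigen (Matrix.isHermitian_transpose_mul_self M)

/-- construction half of Eckart-Young -/
lemma ey_upper {n m : ℕ} (M : Matrix (Fin n) (Fin m) ℝ) (k : ℕ) (hkm : k ≤ m) :
    ∃ B : Matrix (Fin n) (Fin m) ℝ, B.rank ≤ k ∧ frob2 (M - B) = tailSum M k := by
  classical
  have hct : Mᴴ = Mᵀ := Matrix.conjTranspose_eq_transpose_of_trivial M
  have hS := Matrix.isHermitian_transpose_mul_self M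
  set g : Fin m → ℝ := hS.eigenvalues with hg
  set σ := Tuple.sort g with hσ
  obtain ⟨Q, hQ2, hQt, hQrk, -, hSQ, -⟩ := herm_proj hS
    (fun i => if m - k ≤ ((σ.symm i : Fin m) : ℕ) then 1 else 0)
    (fun i => by by_cases hh : m - k ≤ ((σ.symm i : Fin m) : ℕ) <;> simp [hh])
  refine ⟨M * Q, ?_, ?_⟩
  · calc (M * Q).rank ≤ Q.rank := Matrix.rank_mul_le_right M Q
      _ ≤ _ := hQrk
      _ ≤ k := by
        have hfe : (Finset.univ.filter fun i =>
              (if m - k ≤ ((σ.symm i : Fin m) : ℕ) then (1:ℝ) else 0) ≠ 0)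
            = (Finset.univ.filter fun i => m - k ≤ ((σ.symm i : Fin m) : ℕ)) := by
          apply Finset.filter_congr
          intro i _
          by_cases hh : m - k ≤ ((σ.symm i : Fin m) : ℕ) <;> simp [hh]
        rw [hfe]
        have hcard : (Finset.univ.filter fun i => m - k ≤ ((σ.symm i : Fin m) : ℕ)).card
            = (Finset.univ.filter fun l : Fin m => m - k ≤ (l : ℕ)).card := by
          apply Finset.card_bij (fun i _ => σ.symm i)
          · intro a ha; simp only [Finset.mem_filter] at ha ⊢; exact ⟨Finset.mem_univ _, ha.2⟩
          · intro a _ b _ hab; exact σ.symm.injective hab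
          · intro b hb
            refine ⟨σ b, ?_, by simp⟩
            simp only [Finset.mem_filter] at hb ⊢
            exact ⟨Finset.mem_univ _, by simpa using hb.2⟩
        rw [hcard, card_filter_ge m (m - k) (by omega)]
        omega
  · have hsplit := frob2_split_right M Q hQ2 hQt
    have hfm := frob2_M_eq M
    have hfq : frob2 (M * Q) = ∑ i, g i * (if m - k ≤ ((σ.symm i : Fin m) : ℕ) then (1:ℝ) else 0) := by
      rw [frob2_mul_proj M Q hQ2 hQt, ← hct]
      exact hSQ
    have hfm' : frob2 M = ∑ i, g i := hfm
    have key : frob2 (M - M * Q)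
        = ∑ i, (if ((σ.symm i : Fin m) : ℕ) < m - k then g i else 0) := by
      have h1 : frob2 (M - M * Q)
          = ∑ i, g i - ∑ i, g i * (if m - k ≤ ((σ.symm i : Fin m) : ℕ) then (1:ℝ) else 0) := by
        rw [← hfm', ← hfq]; linarith
      rw [h1, ← Finset.sum_sub_distrib]
      apply Finset.sum_congr rfl
      intro i _
      by_cases hh : m - k ≤ ((σ.symm i : Fin m) : ℕ)
      · simp [hh, show ¬ (((σ.symm i : Fin m) : ℕ) < m - k) by omega]
      · simp [hh, show (((σ.symm i : Fin m) : ℕ) < m - k) by omega]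
    have hts : tailSum M k = ∑ l : Fin m, if (l : ℕ) < m - k then g (σ l) else 0 := rfl
    rw [key, hts, ← Equiv.sum_comp σ (fun i => if ((σ.symm i : Fin m) : ℕ) < m - k then g i else 0)]
    apply Finset.sum_congr rfl
    intro l _
    rw [Equiv.symm_apply_apply]

lemma trunc_spec {n m : ℕ} (M : Matrix (Fin n) (Fin m) ℝ) (k : ℕ) (hkm : k ≤ m) :
    (trunc M k).rank ≤ k ∧ frob2 (M - trunc M k) = tailSum M k ∧
      ∀ C : Matrix (Fin n) (Fin m) ℝ, C.rank ≤ k →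
        frob2 (M - trunc M k) ≤ frob2 (M - C) := by
  rcases Nat.eq_zero_or_pos k with rfl | hk
  · have htr : trunc M 0 = 0 := by rw [trunc, if_pos rfl]
    have hval : frob2 (M - trunc M 0) = tailSum M 0 := by
      rw [htr, sub_zero, frob2_M_eq M, tailSum]
      rw [← Equiv.sum_comp (Tuple.sort (Matrix.isHermitian_transpose_mul_self M).eigenvalues)
        ((Matrix.isHermitian_transpose_mul_self M).eigenvalues)]
      apply Finset.sum_congr rfl
      intro l _
      rw [if_pos]
      omega
    refine ⟨by simp [htr], hval, fun C hC => hval ▸ ey_lower M 0 hkm C hC⟩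
  · have hk0 : k ≠ 0 := by omega
    obtain ⟨B, hBrk, hBval⟩ := ey_upper M k hkm
    have hpred : ∃ B0 : Matrix (Fin n) (Fin m) ℝ, B0.rank ≤ k ∧
        ∀ C : Matrix (Fin n) (Fin m) ℝ, C.rank ≤ k → frob2 (M - B0) ≤ frob2 (M - C) :=
      ⟨B, hBrk, fun C hC => by rw [hBval]; exact ey_lower M k hkm C hC⟩
    have hspec := Classical.epsilon_spec hpred
    have htr : trunc M k = Classical.epsilon fun B0 : Matrix (Fin n) (Fin m) ℝ =>
        B0.rank ≤ k ∧ ∀ C : Matrix (Fin n) (Fin m) ℝ, C.rank ≤ k →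
          frob2 (M - B0) ≤ frob2 (M - C) := by
      rw [trunc, if_neg hk0]
    rw [← htr] at hspec
    refine ⟨hspec.1, ?_, hspec.2⟩
    apply le_antisymm
    · rw [← hBval]; exact hspec.2 B hBrk
    · exact ey_lower M k hkm _ hspec.1

lemma sval_sq {n m : ℕ} (M : Matrix (Fin n) (Fin m) ℝ) (k : ℕ) (hk1 : 1 ≤ k) (hkm : k ≤ m) :
    sval M k ^ 2 = (Matrix.isHermitian_transpose_mul_self M).eigenvalues
      (Tuple.sort (Matrix.isHermitian_transpose_mul_self M).eigenvalues ⟨m - k, by omega⟩) := by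
  rw [sval, dif_pos ⟨hk1, hkm⟩, Real.sq_sqrt (eigen_nonneg M _)]

lemma tailSum_succ {n m : ℕ} (M : Matrix (Fin n) (Fin m) ℝ) (k : ℕ) (hk : k < m) :
    tailSum M k = tailSum M (k + 1) + sval M (k + 1) ^ 2 := by
  have hidx : m - (k+1) < m := by omega
  rw [sval_sq M (k+1) (by omega) (by omega), tailSum, tailSum]
  set g := (Matrix.isHermitian_transpose_mul_self M).eigenvalues
  set σ := Tuple.sort g
  have key : ∀ l : Fin m, (if (l : ℕ) < m - k then g (σ l) else 0)
      = (if (l : ℕ) < m - (k+1) then g (σ l) else 0)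
        + (if l = ⟨m - (k+1), hidx⟩ then g (σ l) else 0) := by
    intro l
    by_cases h1 : (l : ℕ) < m - (k+1)
    · rw [if_pos (by omega), if_pos h1, if_neg (by intro hl; subst hl; simp at h1), add_zero]
    · by_cases h2 : l = ⟨m - (k+1), hidx⟩
      · have hlv : (l : ℕ) = m - (k+1) := by rw [h2]
        rw [if_pos (by omega), if_neg h1, if_pos h2, zero_add, h2]
      · have hlv : (l : ℕ) ≠ m - (k+1) := fun hc => h2 (Fin.ext hc)
        rw [if_neg (by omega), if_neg h1, if_neg h2, add_zero]
  rw [Finset.sum_congr rfl (fun l _ => key l), Finset.sum_add_distrib]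
  congr 1
  rw [Finset.sum_ite_eq' Finset.univ (⟨m - (k+1), hidx⟩ : Fin m) (fun l => g (σ l))]
  simp

lemma tailSum_diff {n m : ℕ} (M : Matrix (Fin n) (Fin m) ℝ) (i j : ℕ)
    (hij : i ≤ j) (hjm : j ≤ m) :
    tailSum M i = tailSum M j + ∑ k ∈ Finset.Icc (i + 1) j, sval M k ^ 2 := by
  induction j, hij using Nat.le_induction with
  | base => simp [Finset.Icc_eq_empty_of_lt (by omega : i < i + 1)]
  | succ j hij ih =>
    have hjm' : j ≤ m := by omega
    rw [ih hjm', tailSum_succ M j (by omega), Finset.sum_Icc_succ_top (by omega : i + 1 ≤ j + 1)]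
    ring

lemma tailSum_nonneg {n m : ℕ} (M : Matrix (Fin n) (Fin m) ℝ) (k : ℕ) :
    0 ≤ tailSum M k := by
  apply Finset.sum_nonneg
  intro l _
  split
  · exact eigen_nonneg M _
  · exact le_refl 0

/-- P-projection: numerator identity -/
lemma num_eq {n m : ℕ} (Y : Matrix (Fin n) (Fin m) ℝ) (P : Matrix (Fin n) (Fin n) ℝ)
    (hP2 : P * P = P) (hPt : Pᵀ = P) (k : ℕ) (hkm : k ≤ m) :
    frob2 (Y - trunc (P * Y) k) = frob2 (Y - P * Y) + tailSum (P * Y) k := by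
  obtain ⟨hrk, hval, hmin⟩ := trunc_spec (P * Y) k hkm
  set T := trunc (P * Y) k with hT
  -- first: P * T = T
  have hPT : P * T = T := by
    have hsplit := frob2_split_left (P * Y - T) P hP2 hPt
    have h1 : P * (P * Y - T) = P * Y - P * T := by
      rw [Matrix.mul_sub, ← Matrix.mul_assoc, hP2]
    have h2 : (P * Y - T) - (P * Y - P * T) = P * T - T := by abel
    rw [h1] at hsplit
    have h3 : frob2 (P * Y - T) ≤ frob2 (P * Y - P * T) := by
      apply hmin
      calc (P * T).rank ≤ T.rank := Matrix.rank_mul_le_right P T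
        _ ≤ k := hrk
    have h4 : frob2 ((P * Y - T) - (P * Y - P * T)) = 0 := by
      linarith [frob2_nonneg ((P * Y - T) - (P * Y - P * T))]
    have h5 := frob2_eq_zero h4
    rw [h2] at h5
    exact sub_eq_zero.mp h5
  -- then split Y - T by P
  have hsplit := frob2_split_left (Y - T) P hP2 hPt
  have h1 : P * (Y - T) = P * Y - T := by rw [Matrix.mul_sub, hPT]
  have h2 : (Y - T) - (P * Y - T) = Y - P * Y := by abel
  rw [h1, h2] at hsplit
  rw [hsplit, hval]
  ring

lemma sval_nonneg {n m : ℕ} (M : Matrix (Fin n) (Fin m) ℝ) (k : ℕ) : 0 ≤ sval M k := by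
  rw [sval]
  split
  · exact Real.sqrt_nonneg _
  · exact le_refl 0

end EY

set_option maxHeartbeats 2000000 in
theorem statement_0
    {n m p q : ℕ}
    (X : Matrix (Fin n) (Fin p) ℝ) (A : Matrix (Fin p) (Fin m) ℝ)
    (E Y : Matrix (Fin n) (Fin m) ℝ)
    (P : Matrix (Fin n) (Fin n) ℝ)
    (hY : Y = X * A + E)
    (hP2 : P * P = P) (hPt : P.transpose = P) (hPX : P * X = X)
    (hq : X.rank = q) (hPq : P.rank = q)
    (lam : ℝ) (hlam : 0 < lam)
    (i j : ℕ) (hij : i < j) (hjK : j ≤ Kfun n m q lam) :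
    (sighat2 Y P lam j ≤ sighat2 Y P lam i ↔
      lam * sighat2 Y P lam j ≤
        (∑ k ∈ Finset.Icc (i + 1) j, (sval (P * Y) k) ^ 2) / ((j : ℝ) - i)) ∧
    (sighat2 Y P lam j ≤ sighat2 Y P lam (j - 1) ↔
      lam * sighat2 Y P lam j ≤ (sval (P * Y) j) ^ 2) ∧
    ((sval (P * Y) j) ^ 2 ≤ lam * sighat2 Y P lam j ↔
      (sval (P * Y) j) ^ 2 ≤ lam * sighat2 Y P lam (j - 1)) := by
  have hjm : j ≤ m := by
    rw [Kfun] at hjK; omega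
  have hjf : j ≤ Nat.floor ((((n * m : ℕ) : ℝ) - 1) / lam) := by
    rw [Kfun] at hjK; omega
  have hj1 : 1 ≤ j := by omega
  set N : ℝ := ((n * m : ℕ) : ℝ) with hN
  -- N ≥ 1
  have hnm1 : 1 ≤ n * m := by
    by_contra h
    have h0 : n * m = 0 := by omega
    have : (((n * m : ℕ) : ℝ) - 1) / lam < 0 := by
      rw [h0]
      push_cast
      exact div_neg_of_neg_of_pos (by norm_num) hlam
    rw [Nat.floor_of_nonpos this.le] at hjf
    omega
  have hN1 : 1 ≤ N := by rw [hN]; exact_mod_cast hnm1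
  -- lam * j ≤ N - 1
  have hx0 : 0 ≤ (N - 1) / lam := div_nonneg (by linarith) hlam.le
  have hjR : (j : ℝ) ≤ (N - 1) / lam := (Nat.le_floor_iff hx0).mp hjf
  have hlamj : lam * j ≤ N - 1 := by
    have := (le_div_iff₀ hlam).mp hjR
    linarith
  -- denominators
  have hDj : 0 < N - lam * j := by linarith
  have hDi : 0 < N - lam * i := by
    have : lam * i ≤ lam * j := by
      apply mul_le_mul_of_nonneg_left _ hlam.le
      exact_mod_cast hij.le
    linarith
  have hcast : ((j - 1 : ℕ) : ℝ) = (j : ℝ) - 1 := by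
    rw [Nat.cast_sub hj1]; norm_num
  have hDj1' : 0 < N - lam * ((j : ℝ) - 1) := by nlinarith
  -- sighat representation
  have hPt' : P.transpose = P := hPt
  have hsig : ∀ k : ℕ, k ≤ m → sighat2 Y P lam k
      = (frob2 (Y - P * Y) + EY.tailSum (P * Y) k) / (N - lam * k) := by
    intro k hk
    rw [sighat2, EY.num_eq Y P hP2 hPt' k hk]
  set c := frob2 (Y - P * Y) with hc
  set t : ℕ → ℝ := EY.tailSum (P * Y) with ht
  have hc0 : 0 ≤ c := EY.frob2_nonneg _
  have ht0 : ∀ k, 0 ≤ t k := fun k => EY.tailSum_nonneg _ k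
  set S : ℝ := ∑ k ∈ Finset.Icc (i + 1) j, (sval (P * Y) k) ^ 2 with hS
  have hS0 : 0 ≤ S := Finset.sum_nonneg fun _ _ => sq_nonneg _
  have hti : t i = t j + S := EY.tailSum_diff (P * Y) i j hij.le hjm
  have htj1 : t (j - 1) = t j + sval (P * Y) j ^ 2 := by
    have h1 := EY.tailSum_diff (P * Y) (j - 1) j (by omega) hjm
    have h2 : j - 1 + 1 = j := by omega
    rw [h2, Finset.Icc_self, Finset.sum_singleton] at h1
    exact h1
  have hd : (0 : ℝ) < (j : ℝ) - i := by
    have : (i : ℝ) < j := by exact_mod_cast hij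
    linarith
  set e : ℝ := sval (P * Y) j ^ 2 with he
  have he0 : 0 ≤ e := sq_nonneg _
  rw [hsig j hjm, hsig i (by omega), hsig (j - 1) (by omega), hti, htj1]
  set a : ℝ := c + t j with ha
  have ha0 : 0 ≤ a := by have := ht0 j; linarith
  have hij' : (i : ℝ) ≤ (j : ℝ) := by exact_mod_cast hij.le
  clear_value N c t S e a
  clear hsig hc ht hS he hjf hjK hY hP2 hPt hPX hq hPq hPt'
  clear X A E Y P
  have hae : c + (t j + S) = a + S := by rw [ha]; ring
  have hae' : c + (t j + e) = a + e := by rw [ha]; ring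
  rw [hae, hae']
  refine ⟨?_, ?_, ?_⟩
  · rw [div_le_div_iff₀ hDj hDi, ← mul_div_assoc, div_le_div_iff₀ hDj hd]
    constructor <;> intro h <;> nlinarith [h]
  · rw [hcast, div_le_div_iff₀ hDj hDj1', ← mul_div_assoc, div_le_iff₀ hDj]
    constructor <;> intro h <;> nlinarith [h]
  · rw [hcast, ← mul_div_assoc, ← mul_div_assoc, le_div_iff₀ hDj, le_div_iff₀ hDj1']
    constructor <;> intro h <;> nlinarith [h]

end
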